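/- Let $Z$ be a random variable supported on the finite set $\mathrm{Spec}(H) \subset D(0,\|H\|) \subset \mathbb{C}$, let $q(z) = \prod_{i=1}^k (z - s_i)$ with all $s_i \in D(0,\|H\|)$, and let $\check{q}(z) = \prod_{i=1}^k (z - \check{s}_i)$ with $|s_i - \check{s}_i| \le \beta$ for all $i$. Assume $\beta/c \le \mathrm{gap}(H)$ for some $0 < c \le 1/2$. Then $\Pr[\mathrm{dist}(Z, \{s_1,\dots,s_k\}) \le \beta/(2c)] \ge \frac{\mathbb{E}[|\check{q}(Z)|^2] - (1+2c)^{2k}\,\mathbb{E}[|q(Z)|^2]}{(2(\|H\|+\beta)(1+2c))^{2k}}$. -/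

import Mathlib

open Matrix MeasureTheory

/-- The spectral (ℓ² operator) norm of a complex matrix. -/
noncomputable def specNorm {m : Type*} [Fintype m] [DecidableEq m] (A : Matrix m m ℂ) : ℝ :=
  ‖Matrix.toEuclideanCLM (𝕜 := ℂ) A‖

/-- Minimum eigenvalue gap of a matrix. -/
noncomputable def gap {m : Type*} [Fintype m] [DecidableEq m] (M : Matrix m m ℂ) : ℝ :=
  sInf {d | ∃ lam ∈ spectrum ℂ M, ∃ mu ∈ spectrum ℂ M, lam ≠ mu ∧ d = dist lam mu}

/-- Root-perturbation dichotomy bound: if `Z` is a random variable supported on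
`Spec(H) ⊆ D(0, ‖H‖)`, `q(z) = ∏ᵢ (z - sᵢ)` with all `sᵢ ∈ D(0, ‖H‖)`,
`q̌(z) = ∏ᵢ (z - šᵢ)` with `|sᵢ - šᵢ| ≤ β`, `0 < c ≤ 1/2`, and `β/c ≤ gap(H)`, then
`Pr[dist(Z, {s₁,…,s_k}) ≤ β/(2c)]
  ≥ (E[|q̌(Z)|²] - (1+2c)^{2k} E[|q(Z)|²]) / (2(‖H‖+β)(1+2c))^{2k}`. -/
theorem stmt9 {n k : ℕ} (H : Matrix (Fin n) (Fin n) ℂ)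
    (hSpec : spectrum ℂ H ⊆ Metric.closedBall 0 (specNorm H))
    {Ω : Type*} [MeasurableSpace Ω] (μ : Measure Ω) [IsProbabilityMeasure μ]
    (Z : Ω → ℂ) (hZ : Measurable Z) (hsupp : ∀ ω, Z ω ∈ spectrum ℂ H)
    (s scheck : Fin k → ℂ) (hs : ∀ i, s i ∈ Metric.closedBall (0 : ℂ) (specNorm H))
    (β c : ℝ) (hβ : ∀ i, ‖s i - scheck i‖ ≤ β)
    (hc0 : 0 < c) (hc : c ≤ 1 / 2) (hgap : β / c ≤ gap H) :
    ENNReal.ofReal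
        (((∫ ω, (∏ i, ‖Z ω - scheck i‖ ^ 2) ∂μ) -
            (1 + 2 * c) ^ (2 * k) * ∫ ω, (∏ i, ‖Z ω - s i‖ ^ 2) ∂μ) /
          (2 * (specNorm H + β) * (1 + 2 * c)) ^ (2 * k)) ≤
      μ {ω | ∃ i : Fin k, dist (Z ω) (s i) ≤ β / (2 * c)} := by
  rcases Nat.eq_zero_or_pos k with hk | hk
  · subst hk
    simp [integral_const]
  -- k ≥ 1 case
  have hβ0 : 0 ≤ β := le_trans (norm_nonneg _) (hβ ⟨0, hk⟩)
  set A := specNorm H with hA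
  have hA0 : 0 ≤ A := norm_nonneg _
  set G := {ω | ∃ i : Fin k, dist (Z ω) (s i) ≤ β / (2 * c)} with hGdef
  set D := 2 * (A + β) * (1 + 2 * c) with hD
  have hc1 : (1:ℝ) ≤ 1 + 2 * c := by linarith
  have hDnn : 0 ≤ D := by positivity
  rcases eq_or_lt_of_le hDnn with hD0 | hDpos
  · rw [← hD0, zero_pow (by omega : 2 * k ≠ 0), div_zero]
    simp
  have hZabs : ∀ ω, ‖Z ω‖ ≤ A := by
    intro ω
    have := hSpec (hsupp ω)
    simpa [Complex.dist_eq] using this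
  have hsabs : ∀ i, ‖s i‖ ≤ A := by
    intro i
    have := hs i
    simpa [Complex.dist_eq] using this
  have hscabs : ∀ i, ‖scheck i‖ ≤ A + β := by
    intro i
    calc ‖scheck i‖ = ‖s i - (s i - scheck i)‖ := by
          rw [sub_sub_cancel]
    _ ≤ ‖s i‖ + ‖s i - scheck i‖ := norm_sub_le _ _
    _ ≤ A + β := add_le_add (hsabs i) (hβ i)
  -- pointwise factor bounds
  have hfac : ∀ ω i, ‖Z ω - scheck i‖ ≤ D := by
    intro ω i
    calc ‖Z ω - scheck i‖ ≤ ‖Z ω‖ + ‖scheck i‖ :=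
      norm_sub_le _ _
    _ ≤ A + (A + β) := add_le_add (hZabs ω) (hscabs i)
    _ ≤ 2 * (A + β) := by linarith
    _ ≤ D := by nlinarith
  have hgfac : ∀ ω i, ‖Z ω - s i‖ ≤ D := by
    intro ω i
    calc ‖Z ω - s i‖ ≤ ‖Z ω‖ + ‖s i‖ :=
      norm_sub_le _ _
    _ ≤ A + A := add_le_add (hZabs ω) (hsabs i)
    _ ≤ 2 * (A + β) := by linarith
    _ ≤ D := by nlinarith
  have hprodnn : ∀ (t : Fin k → ℂ) ω, (0:ℝ) ≤ ∏ i, ‖Z ω - t i‖ ^ 2 :=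
    fun t ω => Finset.prod_nonneg fun i _ => sq_nonneg _
  have hfD : ∀ (t : Fin k → ℂ), (∀ ω i, ‖Z ω - t i‖ ≤ D) →
      ∀ ω, (∏ i, ‖Z ω - t i‖ ^ 2) ≤ D ^ (2 * k) := by
    intro t ht ω
    have h1 : (∏ i, ‖Z ω - t i‖ ^ 2) ≤ ∏ _i : Fin k, D ^ 2 :=
      Finset.prod_le_prod (fun i _ => sq_nonneg _)
        (fun i _ => pow_le_pow_left₀ (norm_nonneg _) (ht ω i) 2)
    simpa [Finset.prod_const, Finset.card_univ, pow_mul] using h1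
  have hmeas : ∀ (t : Fin k → ℂ),
      Measurable fun ω => ∏ i, ‖Z ω - t i‖ ^ 2 := by
    intro t
    exact Finset.measurable_prod _ fun i _ =>
      ((continuous_norm.measurable.comp (hZ.sub measurable_const)).pow_const 2)
  have hint : ∀ (t : Fin k → ℂ), (∀ ω i, ‖Z ω - t i‖ ≤ D) →
      Integrable (fun ω => ∏ i, ‖Z ω - t i‖ ^ 2) μ := by
    intro t ht
    refine (integrable_const (D ^ (2 * k))).mono' (hmeas t).aestronglyMeasurable ?_
    filter_upwards with ω
    rw [Real.norm_eq_abs, abs_of_nonneg (hprodnn t ω)]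
    exact hfD t ht ω
  have hfint := hint scheck hfac
  have hgint := hint s hgfac
  have hG : MeasurableSet G := by
    rw [hGdef, Set.setOf_exists]
    exact MeasurableSet.iUnion fun i =>
      measurableSet_le (hZ.dist measurable_const) measurable_const
  -- pointwise key inequality
  have hpt : ∀ ω, (∏ i, ‖Z ω - scheck i‖ ^ 2) ≤
      (1 + 2 * c) ^ (2 * k) * (∏ i, ‖Z ω - s i‖ ^ 2) +
        Set.indicator G (fun _ => D ^ (2 * k)) ω := by
    intro ω
    by_cases hω : ω ∈ G
    · rw [Set.indicator_of_mem hω]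
      have h1 : (0:ℝ) ≤ (1 + 2 * c) ^ (2 * k) * (∏ i, ‖Z ω - s i‖ ^ 2) := by
        have := hprodnn s ω
        positivity
      linarith [hfD scheck hfac ω]
    · rw [Set.indicator_of_notMem hω, add_zero]
      have hω' : ∀ i : Fin k, β / (2 * c) < dist (Z ω) (s i) := by
        intro i
        by_contra h
        exact hω ⟨i, le_of_not_gt h⟩
      calc (∏ i, ‖Z ω - scheck i‖ ^ 2)
          ≤ ∏ i, ((1 + 2 * c) * ‖Z ω - s i‖) ^ 2 := by
            refine Finset.prod_le_prod (fun i _ => sq_nonneg _) (fun i _ => ?_)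
            refine pow_le_pow_left₀ (norm_nonneg _) ?_ 2
            have hd : β ≤ 2 * c * ‖Z ω - s i‖ := by
              have := hω' i
              rw [Complex.dist_eq] at this
              rw [div_lt_iff₀ (by linarith : (0:ℝ) < 2 * c)] at this
              nlinarith
            calc ‖Z ω - scheck i‖
                = ‖(Z ω - s i) + (s i - scheck i)‖ := by
                  rw [sub_add_sub_cancel]
              _ ≤ ‖Z ω - s i‖ + ‖s i - scheck i‖ :=
                  norm_add_le _ _
              _ ≤ ‖Z ω - s i‖ + β := by linarith [hβ i]
              _ ≤ (1 + 2 * c) * ‖Z ω - s i‖ := by nlinarith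
        _ = (1 + 2 * c) ^ (2 * k) * (∏ i, ‖Z ω - s i‖ ^ 2) := by
            simp only [mul_pow, Finset.prod_mul_distrib, Finset.prod_const,
              Finset.card_univ, Fintype.card_fin, pow_mul]
  -- integrate
  have hrhsint : Integrable (fun ω =>
      (1 + 2 * c) ^ (2 * k) * (∏ i, ‖Z ω - s i‖ ^ 2) +
        Set.indicator G (fun _ => D ^ (2 * k)) ω) μ :=
    (hgint.const_mul _).add ((integrable_const _).indicator hG)
  have key : (∫ ω, (∏ i, ‖Z ω - scheck i‖ ^ 2) ∂μ) ≤
      (1 + 2 * c) ^ (2 * k) * (∫ ω, (∏ i, ‖Z ω - s i‖ ^ 2) ∂μ) +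
        D ^ (2 * k) * (μ G).toReal := by
    have h1 := integral_mono hfint hrhsint hpt
    rwa [integral_add (hgint.const_mul _) ((integrable_const _).indicator hG),
      integral_const_mul, integral_indicator_const _ hG, smul_eq_mul, mul_comm _ (D ^ (2*k))] at h1
  have hDk : (0:ℝ) < D ^ (2 * k) := pow_pos hDpos _
  refine ENNReal.ofReal_le_of_le_toReal ?_
  rw [div_le_iff₀ hDk]
  nlinarith [key, ENNReal.toReal_nonneg (a := μ G)]
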